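/- arXiv:2005.10788 — 2 statements merged into one kernel-verified Lean document; each statement's English description precedes it below -/
import Mathlib

section
/- Let F: 𝔽₂ⁿ → 𝔽₂ⁿ be a quadratic APN function. Then the number of distinct nonzero values taken by Φ_F is odd. -/
open Finset

abbrev V (n : ℕ) : Type := Fin n → ZMod 2

def dotp {n : ℕ} (u y : V n) : ZMod 2 := ∑ i, u i * y i

def IsAPN {n : ℕ} (F : V n → V n) : Prop :=
  ∀ a : V n, a ≠ 0 → ∀ b : V n,
    (Finset.univ.filter (fun x => F x + F (x + a) = b)).card ≤ 2

/-- `F` has algebraic degree exactly 2: all second derivatives vanish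
(degree ≤ 2) and some first derivative is non-constant (degree ≥ 2). -/
def IsQuadratic {n : ℕ} (F : V n → V n) : Prop :=
  (∀ x y a : V n,
    F (x + y + a) + F (x + y) + F (x + a) + F x
      + F (y + a) + F y + F a + F 0 = 0) ∧
  (∃ x a : V n, F (x + a) + F x + F a + F 0 ≠ 0)

/-- `Φ` and `φ` describe the sets `B_a(F)` as affine hyperplanes. -/
def PhiSpec {n : ℕ} (F Φ : V n → V n) (φ : V n → ZMod 2) : Prop :=
  Φ 0 = 0 ∧ φ 0 = 1 ∧
  ∀ a : V n, a ≠ 0 → Φ a ≠ 0 ∧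
    {y : V n | ∃ x, F x + F (x + a) = y} = {y : V n | dotp (Φ a) y = φ a}

def wt {n : ℕ} (a : V n) : ℕ := (Finset.univ.filter (fun i => a i = 1)).card

/-- ANF coefficient of `f` at the monomial with support `a` (Möbius inversion). -/
def anfCoeff {n : ℕ} (f : V n → ZMod 2) (a : V n) : ZMod 2 :=
  ∑ x ∈ Finset.univ.filter (fun x : V n => ∀ i, x i = 1 → a i = 1), f x

/-- Algebraic degree of a Boolean function. -/
def degB {n : ℕ} (f : V n → ZMod 2) : ℕ :=
  Finset.sup (Finset.univ.filter (fun a : V n => anfCoeff f a ≠ 0)) wt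

/-- The monomial with support `a`, evaluated at `x`. -/
def mono {n : ℕ} (a x : V n) : ZMod 2 :=
  ∏ i ∈ Finset.univ.filter (fun i => a i = 1), x i

def walsh {n : ℕ} (f : V n → ZMod 2) (u : V n) : ℤ :=
  ∑ x : V n, (-1 : ℤ) ^ ((f x + dotp u x).val)

/-- The associated function `γ_G(a,b) = 1` as a proposition. -/
def gammaP {n : ℕ} (G : V n → V n) (a b : V n) : Prop :=
  a ≠ 0 ∧ ∃ x, G x + G (x + a) = b

/-! ### Auxiliary lemmas -/

lemma z2_add_self (x : ZMod 2) : x + x = 0 := by revert x; decide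

lemma z2_neg (x : ZMod 2) : -x = x := by revert x; decide

lemma z2_eq_of_add_eq_zero {p q : ZMod 2} (h : p + q = 0) : p = q := by
  revert p q h; decide

lemma z2_one_of_ne_zero {p : ZMod 2} (h : p ≠ 0) : p = 1 := by
  revert p; decide

lemma vadd_self {n : ℕ} (a : V n) : a + a = 0 := by
  funext i; exact z2_add_self (a i)

lemma dotp_add {n : ℕ} (u y z : V n) :
    dotp u (y + z) = dotp u y + dotp u z := by
  simp [dotp, Pi.add_apply, mul_add, Finset.sum_add_distrib]

def sing {n : ℕ} (c : ZMod 2) (j : Fin n) : V n := fun i => if i = j then c else 0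

lemma dotp_sing {n : ℕ} (u : V n) (c : ZMod 2) (j : Fin n) :
    dotp u (sing c j) = u j * c := by
  simp [dotp, sing, mul_ite, Finset.sum_ite_eq']

/-- Uniqueness of the normal vector of an affine hyperplane. -/
lemma hyperplane_uniq {n : ℕ} {w v : V n} {c d : ZMod 2} (hw : w ≠ 0) (hv : v ≠ 0)
    (h : ∀ y, dotp w y = c → dotp v y = d) : v = w := by
  obtain ⟨j, hj⟩ : ∃ j, w j ≠ 0 := by
    by_contra hc
    push_neg at hc
    exact hw (funext fun i => hc i)
  have hwj : w j = 1 := z2_one_of_ne_zero hj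
  -- step 0 : v vanishes on the kernel of w
  have step0 : ∀ t, dotp w t = 0 → dotp v t = 0 := by
    intro t ht
    have hy0 : dotp w (sing c j) = c := by rw [dotp_sing, hwj, one_mul]
    have hv0 : dotp v (sing c j) = d := h _ hy0
    have hyt : dotp w (sing c j + t) = c := by rw [dotp_add, hy0, ht, add_zero]
    have hvt : dotp v (sing c j + t) = d := h _ hyt
    rw [dotp_add, hv0] at hvt
    have : d + dotp v t = d + 0 := by rw [add_zero]; exact hvt
    exact add_left_cancel this
  -- coordinates
  have hco : ∀ i, v i = v j * w i := by
    intro i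
    have h1 : dotp w (sing 1 i + sing (w i) j) = 0 := by
      rw [dotp_add, dotp_sing, dotp_sing, mul_one, hwj, one_mul, z2_add_self]
    have h2 := step0 _ h1
    rw [dotp_add, dotp_sing, dotp_sing, mul_one] at h2
    have := z2_eq_of_add_eq_zero h2
    rw [this, mul_comm]
  have hvj : v j = 1 := by
    apply z2_one_of_ne_zero
    intro h0
    apply hv
    funext i
    rw [hco i, h0, zero_mul]; rfl
  funext i
  rw [hco i, hvj, one_mul]

section Main

variable {n : ℕ} {F Φ : V n → V n} {φ : V n → ZMod 2}

lemma mem_lem (hspec : PhiSpec F Φ φ) {a : V n} (ha : a ≠ 0) (x : V n) :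
    dotp (Φ a) (F x + F (x + a)) = φ a := by
  have h := (hspec.2.2 a ha).2
  have hx : (F x + F (x + a)) ∈ {y : V n | ∃ x, F x + F (x + a) = y} := ⟨x, rfl⟩
  rw [h] at hx
  exact hx

lemma onto_lem (hspec : PhiSpec F Φ φ) {a : V n} (ha : a ≠ 0) {y : V n}
    (hy : dotp (Φ a) y = φ a) : ∃ x, F x + F (x + a) = y := by
  have h := (hspec.2.2 a ha).2
  have : y ∈ {y : V n | dotp (Φ a) y = φ a} := hy
  rw [← h] at this
  exact this

/-- Closure of the fibers of `Φ`. -/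
lemma closure_lem (hspec : PhiSpec F Φ φ) {a b : V n} (ha : a ≠ 0) (hb : b ≠ 0)
    (hab : a ≠ b) (hΦ : Φ a = Φ b) : Φ (a + b) = Φ a := by
  have hc : a + b ≠ 0 := by
    intro h
    apply hab
    have : a + b + b = 0 + b := by rw [h]
    rwa [add_assoc, vadd_self, add_zero, zero_add] at this
  refine (hyperplane_uniq (c := φ (a + b)) (d := φ a + φ b)
    (hspec.2.2 (a + b) hc).1 (hspec.2.2 a ha).1 ?_).symm
  intro y hy
  obtain ⟨x, hx⟩ := onto_lem hspec hc hy
  have e1 : y = (F x + F (x + b)) + (F (x + b) + F (x + b + a)) := by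
    rw [← hx]
    have h2 : F (x + b) + F (x + b) = 0 := vadd_self _
    have h3 : x + b + a = x + (a + b) := by ring
    rw [h3]
    linear_combination -h2
  rw [e1, dotp_add]
  have d1 : dotp (Φ a) (F x + F (x + b)) = φ b := by
    rw [hΦ]; exact mem_lem hspec hb x
  have d2 : dotp (Φ a) (F (x + b) + F (x + b + a)) = φ a := mem_lem hspec ha (x + b)
  rw [d1, d2, add_comm]

end Main

theorem stmt3 {n : ℕ} (F Φ : V n → V n) (φ : V n → ZMod 2)
    (hq : IsQuadratic F) (hAPN : IsAPN F) (hspec : PhiSpec F Φ φ) :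
    Odd (Set.ncard {v : V n | v ≠ 0 ∧ ∃ a, Φ a = v}) := by
  classical
  -- n ≥ 1
  have hn : 1 ≤ n := by
    by_contra h
    have hn0 : n = 0 := by omega
    subst hn0
    obtain ⟨x, a, hxa⟩ := hq.2
    exact hxa (Subsingleton.elim _ _)
  set S : Finset (V n) := univ.filter (fun v => v ≠ 0 ∧ ∃ a, Φ a = v) with hS
  have hset : {v : V n | v ≠ 0 ∧ ∃ a, Φ a = v} = ↑S := by
    ext v; simp [hS]
  rw [hset, Set.ncard_coe_finset]
  set fib : V n → Finset (V n) := fun v => univ.filter (fun a => Φ a = v) with hfib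
  -- the nonzero elements are partitioned by the fibers
  have hpart : univ.filter (fun a : V n => a ≠ 0) = S.biUnion fib := by
    ext a
    simp only [mem_filter, mem_univ, true_and, mem_biUnion, hS, hfib]
    constructor
    · intro ha
      exact ⟨Φ a, ⟨(hspec.2.2 a ha).1, a, rfl⟩, rfl⟩
    · rintro ⟨v, hv, hav⟩
      intro h0
      subst h0
      rw [hspec.1] at hav
      exact hv.1 hav.symm
  have hdisj : ∀ v ∈ S, ∀ w ∈ S, v ≠ w → Disjoint (fib v) (fib w) := by
    intro v _ w _ hvw
    simp only [Finset.disjoint_left, hfib, mem_filter, mem_univ, true_and]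
    intro a h1 h2
    exact hvw (h1 ▸ h2 ▸ rfl)
  have hcardV : Fintype.card (V n) = 2 ^ n := by simp
  have hcount : ∑ v ∈ S, (fib v).card = 2 ^ n - 1 := by
    rw [← Finset.card_biUnion hdisj, ← hpart]
    rw [Finset.filter_ne']
    rw [Finset.card_erase_of_mem (mem_univ _), Finset.card_univ, hcardV]
  -- each fiber has odd cardinality
  have hodd : ∀ v ∈ S, (fib v).card % 2 = 1 := by
    intro v hv
    obtain ⟨hv0, a0, ha0⟩ : v ≠ 0 ∧ ∃ a, Φ a = v := by
      simpa [hS] using hv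
    have hne0 : ∀ a : V n, Φ a = v → a ≠ 0 := by
      intro a hav h0
      subst h0
      rw [hspec.1] at hav
      exact hv0 hav.symm
    let H : AddSubgroup (V n) :=
      { carrier := {a | a = 0 ∨ Φ a = v}
        zero_mem' := Or.inl rfl
        add_mem' := by
          rintro a b (rfl | ha) (rfl | hb)
          · left; rw [add_zero]
          · right; rwa [zero_add]
          · right; rwa [add_zero]
          · by_cases hab : a = b
            · left; rw [hab, vadd_self]
            · right
              rw [closure_lem hspec (hne0 a ha) (hne0 b hb) hab (ha.trans hb.symm)]
              exact ha
        neg_mem' := by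
          intro a ha
          have : -a = a := by funext i; exact z2_neg (a i)
          rwa [this] }
    have hdvd : Nat.card H ∣ 2 ^ n := by
      have h := AddSubgroup.card_addSubgroup_dvd_card H
      rwa [Nat.card_eq_fintype_card (α := V n), hcardV] at h
    have hHset : (H : Set (V n)) = ↑(insert 0 (fib v)) := by
      ext a
      simp only [Finset.coe_insert, Set.mem_insert_iff, Finset.mem_coe, hfib,
        mem_filter, mem_univ, true_and]
      rfl
    have h0nm : (0 : V n) ∉ fib v := by
      simp only [hfib, mem_filter, mem_univ, true_and, hspec.1]
      exact fun h => hv0 h.symm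
    have hcardH : Nat.card H = (fib v).card + 1 := by
      have e1 : Nat.card H = (H : Set (V n)).ncard := Nat.card_coe_set_eq _
      rw [e1, hHset, Set.ncard_coe_finset, Finset.card_insert_of_notMem h0nm]
    rw [hcardH] at hdvd
    obtain ⟨k, hk, hdk⟩ := (Nat.dvd_prime_pow Nat.prime_two).mp hdvd
    have hfne : 1 ≤ (fib v).card := by
      refine Finset.card_pos.mpr ⟨a0, ?_⟩
      simp [hfib, ha0]
    have hk1 : k ≠ 0 := by
      intro h0
      rw [h0, pow_zero] at hdk
      omega
    have h2d : 2 ∣ (fib v).card + 1 := hdk ▸ dvd_pow_self 2 hk1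
    omega
  -- conclude parity
  rw [Nat.odd_iff]
  have h1 : S.card % 2 = (∑ v ∈ S, (fib v).card) % 2 := by
    rw [Finset.sum_nat_mod]
    congr 1
    rw [Finset.sum_congr rfl hodd, Finset.sum_const, smul_eq_mul, mul_one]
  rw [h1, hcount]
  obtain ⟨m, rfl⟩ := Nat.exists_eq_add_of_le hn
  have : (2 : ℕ) ^ (1 + m) = 2 * 2 ^ m := by rw [pow_add, pow_one]
  have h2 : 1 ≤ 2 ^ m := Nat.one_le_two_pow
  omega
end

section
/- Let Φ: 𝔽₂ⁿ → 𝔽₂ⁿ be any function such that deg(L·Φ) < n for every linear function L: 𝔽₂ⁿ → 𝔽₂ⁿ (where (L·Φ)(x) = L(x)·Φ(x) is a Boolean function). Then each coordinate function Φ_i of Φ has the form Φ_i(x) = f_i(x) + λ_i·Σ(all monomials of degree n−1 and n), with deg(f_i) ≤ n−2 and λ_i ∈ 𝔽₂. -/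
open Finset

lemma zmod2_cases : ∀ c : ZMod 2, c = 0 ∨ c = 1 := by decide
lemma zmod2_add_self : ∀ c : ZMod 2, c + c = 0 := by decide

lemma anfCoeff_mono {n : ℕ} (b a : V n) :
    anfCoeff (mono b) a = if a = b then 1 else 0 := by
  unfold anfCoeff mono
  by_cases hab : a = b
  · subst hab
    rw [if_pos rfl, Finset.sum_eq_single_of_mem a (by simp)]
    · exact Finset.prod_eq_one (fun j hj => (Finset.mem_filter.mp hj).2)
    · intro x hx hxa
      simp only [Finset.mem_filter] at hx
      by_contra hne
      have hfac : ∀ j, a j = 1 → x j = 1 := by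
        intro j hj
        rcases zmod2_cases (x j) with h0 | h1
        · exact absurd (Finset.prod_eq_zero (Finset.mem_filter.mpr ⟨Finset.mem_univ j, hj⟩) h0) hne
        · exact h1
      apply hxa
      funext j
      rcases zmod2_cases (a j) with h0 | h1
      · rcases zmod2_cases (x j) with hx0 | hx1
        · rw [hx0, h0]
        · rw [hx.2 j hx1] at h0; exact absurd h0 (by decide)
      · rw [hfac j h1, h1]
  · rw [if_neg hab]
    by_cases hba : ∀ j, b j = 1 → a j = 1
    · have hj : ∃ j, a j = 1 ∧ b j ≠ 1 := by
        by_contra hcon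
        push_neg at hcon
        apply hab
        funext j
        rcases zmod2_cases (a j) with h0 | h1
        · rcases zmod2_cases (b j) with hb0 | hb1
          · rw [h0, hb0]
          · rw [hba j hb1] at h0; exact absurd h0 (by decide)
        · rw [h1, hcon j h1]
      obtain ⟨j, haj, hbj⟩ := hj
      have hmono : ∀ x : V n, mono b (Function.update x j (x j + 1)) = mono b x := by
        intro x
        unfold mono
        apply Finset.prod_congr rfl
        intro i hi
        have hij : i ≠ j := fun h => hbj (h ▸ (Finset.mem_filter.mp hi).2)
        rw [Function.update_of_ne hij]
      have h1 : ∀ x : V n, mono b x + mono b (Function.update x j (x j + 1)) = 0 := by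
        intro x; rw [hmono]; exact zmod2_add_self _
      have h2 : ∀ x : V n, mono b x ≠ 0 → Function.update x j (x j + 1) ≠ x := by
        intro x _ heq
        have := congrFun heq j
        rw [Function.update_self] at this
        exact absurd this (by rcases zmod2_cases (x j) with h | h <;> rw [h] <;> decide)
      have h3 : ∀ x : V n, x ∈ Finset.univ.filter (fun x : V n => ∀ i, x i = 1 → a i = 1) →
          Function.update x j (x j + 1) ∈
            Finset.univ.filter (fun x : V n => ∀ i, x i = 1 → a i = 1) := by
        intro x hx
        simp only [Finset.mem_filter] at hx ⊢
        refine ⟨Finset.mem_univ _, fun i hi => ?_⟩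
        by_cases hij : i = j
        · exact hij ▸ haj
        · rw [Function.update_of_ne hij] at hi; exact hx.2 i hi
      have h4 : ∀ x : V n, Function.update (Function.update x j (x j + 1)) j
          (Function.update x j (x j + 1) j + 1) = x := by
        intro x
        funext i
        by_cases hij : i = j
        · subst hij
          rw [Function.update_self, Function.update_self, add_assoc, zmod2_add_self, add_zero]
        · rw [Function.update_of_ne hij, Function.update_of_ne hij]
      exact Finset.sum_involution (fun x _ => Function.update x j (x j + 1))
        (fun x _ => h1 x) (fun x _ hne => h2 x hne) h3 (fun x hx => h4 x)
    · push_neg at hba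
      obtain ⟨j, hbj, haj⟩ := hba
      apply Finset.sum_eq_zero
      intro x hx
      simp only [Finset.mem_filter] at hx
      apply Finset.prod_eq_zero (Finset.mem_filter.mpr ⟨Finset.mem_univ j, hbj⟩)
      rcases zmod2_cases (x j) with h0 | h1
      · exact h0
      · exact absurd (hx.2 j h1) haj

lemma filter_allOnes {n : ℕ} :
    Finset.univ.filter (fun x : V n => ∀ i, x i = 1 → (fun _ => (1:ZMod 2)) i = 1)
      = Finset.univ :=
  Finset.filter_true_of_mem (fun x _ => fun _ _ => rfl)

lemma anfCoeff_top_eq_zero {n : ℕ} {g : V n → ZMod 2} (h : degB g < n) :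
    anfCoeff g (fun _ => 1) = 0 := by
  by_contra hne
  have hmem : (fun _ => (1:ZMod 2)) ∈ Finset.univ.filter
      (fun a : V n => anfCoeff g a ≠ 0) := by
    simp only [Finset.mem_filter]; exact ⟨Finset.mem_univ _, hne⟩
  have hle : wt (fun _ => (1:ZMod 2)) ≤ degB g := Finset.le_sup hmem
  have hwt : wt (fun _ => (1:ZMod 2) : V n) = n := by
    simp [wt]
  omega

lemma sum_coord_mul_eq_zero {n : ℕ} (Φ : V n → V n)
    (h : ∀ L : V n →ₗ[ZMod 2] V n, degB (fun x => dotp (L x) (Φ x)) < n)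
    (i k : Fin n) : ∑ x : V n, x k * Φ x i = 0 := by
  let L : V n →ₗ[ZMod 2] V n :=
    { toFun := fun x => fun j => if j = i then x k else 0
      map_add' := by intro x y; funext j; by_cases hj : j = i <;> simp [hj]
      map_smul' := by
        intro c x; funext j
        by_cases hj : j = i <;> simp [hj, Pi.smul_apply, smul_eq_mul] }
  have hg : ∀ x, dotp (L x) (Φ x) = x k * Φ x i := by
    intro x
    simp only [dotp, L, LinearMap.coe_mk, AddHom.coe_mk]
    rw [Finset.sum_eq_single i]
    · rw [if_pos rfl]
    · intro j _ hj; rw [if_neg hj, zero_mul]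
    · intro hi; exact absurd (Finset.mem_univ i) hi
  have h0 := anfCoeff_top_eq_zero (h L)
  rw [anfCoeff, filter_allOnes] at h0
  calc ∑ x : V n, x k * Φ x i = ∑ x : V n, dotp (L x) (Φ x) := by
        exact Finset.sum_congr rfl (fun x _ => (hg x).symm)
    _ = 0 := h0

lemma anfCoeff_high {n : ℕ} (Φ : V n → V n)
    (h : ∀ L : V n →ₗ[ZMod 2] V n, degB (fun x => dotp (L x) (Φ x)) < n)
    (i : Fin n) (a : V n) (ha : n - 1 ≤ wt a) :
    anfCoeff (fun x => Φ x i) a = anfCoeff (fun x => Φ x i) (fun _ => 1) := by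
  by_cases hall : a = fun _ => 1
  · rw [hall]
  · have hk : ∃ k, a k ≠ 1 := by
      by_contra hc; push_neg at hc; exact hall (funext hc)
    obtain ⟨k, hk⟩ := hk
    have hcard : (Finset.univ.filter (fun j => a j = 1)) = Finset.univ.erase k := by
      apply Finset.eq_of_subset_of_card_le
      · intro j hj
        simp only [Finset.mem_filter] at hj
        exact Finset.mem_erase.mpr ⟨fun hjk => hk (hjk ▸ hj.2), Finset.mem_univ j⟩
      · rw [Finset.card_erase_of_mem (Finset.mem_univ k), Finset.card_univ,
          Fintype.card_fin]
        exact ha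
    have haj : ∀ j, j ≠ k → a j = 1 := by
      intro j hj
      have hmem : j ∈ Finset.univ.erase k := Finset.mem_erase.mpr ⟨hj, Finset.mem_univ j⟩
      rw [← hcard] at hmem
      exact (Finset.mem_filter.mp hmem).2
    have hfa : Finset.univ.filter (fun x : V n => ∀ j, x j = 1 → a j = 1)
             = Finset.univ.filter (fun x : V n => ¬ x k = 1) := by
      apply Finset.filter_congr
      intro x _
      constructor
      · intro hx hxk; exact hk (hx k hxk)
      · intro hxk j hxj
        by_cases hjk : j = k
        · exact absurd (hjk ▸ hxj) hxk
        · exact haj j hjk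
    rw [anfCoeff, anfCoeff, hfa, filter_allOnes]
    have hsplit := Finset.sum_filter_add_sum_filter_not Finset.univ
      (fun x : V n => ¬ x k = 1) (fun x => Φ x i)
    have h1 : ∑ x ∈ Finset.univ.filter (fun x : V n => ¬ ¬ x k = 1), Φ x i
        = ∑ x : V n, x k * Φ x i := by
      rw [Finset.sum_filter]
      apply Finset.sum_congr rfl
      intro x _
      rcases zmod2_cases (x k) with h0 | h1
      · rw [h0, zero_mul, if_neg (by simp [h0])]
      · rw [h1, one_mul, if_pos (by simp [h1])]
    rw [← hsplit, h1, sum_coord_mul_eq_zero Φ h i k, add_zero]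

theorem stmt10 {n : ℕ} (Φ : V n → V n)
    (h : ∀ L : V n →ₗ[ZMod 2] V n, degB (fun x => dotp (L x) (Φ x)) < n) :
    ∀ i : Fin n, ∃ (f : V n → ZMod 2) (lam : ZMod 2),
      degB f ≤ n - 2 ∧
      ∀ x : V n, Φ x i =
        f x + lam * ∑ a ∈ Finset.univ.filter (fun a : V n => n - 1 ≤ wt a), mono a x := by
  intro i
  set lam : ZMod 2 := anfCoeff (fun x => Φ x i) (fun _ => 1) with hlam
  set T : Finset (V n) := Finset.univ.filter (fun a : V n => n - 1 ≤ wt a) with hT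
  refine ⟨fun x => Φ x i + lam * ∑ a ∈ T, mono a x, lam, ?_, ?_⟩
  · apply Finset.sup_le
    intro a ha
    simp only [Finset.mem_filter] at ha
    by_contra hgt
    push_neg at hgt
    have hw : n - 1 ≤ wt a := by omega
    apply ha.2
    have hsum : anfCoeff (fun x => Φ x i + lam * ∑ b ∈ T, mono b x) a
        = anfCoeff (fun x => Φ x i) a + lam * ∑ b ∈ T, anfCoeff (mono b) a := by
      rw [anfCoeff, Finset.sum_add_distrib, ← anfCoeff]
      congr 1
      rw [← Finset.mul_sum, Finset.sum_comm]
      rfl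
    rw [hsum, anfCoeff_high Φ h i a hw, ← hlam]
    have hT1 : ∑ b ∈ T, anfCoeff (mono b) a = 1 := by
      have : ∀ b ∈ T, anfCoeff (mono b) a = if a = b then 1 else 0 :=
        fun b _ => anfCoeff_mono b a
      rw [Finset.sum_congr rfl this, Finset.sum_ite_eq T a (fun _ => (1 : ZMod 2)),
        if_pos (by rw [hT]; simp only [Finset.mem_filter]; exact ⟨Finset.mem_univ a, hw⟩)]
    rw [hT1, mul_one, zmod2_add_self]
  · intro x
    rw [add_assoc, zmod2_add_self, add_zero]
end
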